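/- For all m, n ∈ ℕ with n ≥ 2, all ℓ ∈ ℕ₀, all c ∈ ℝ, and all z ∈ ℂ, one has D_{m,n,ℓ}(c; (2m−1) − z) = D_{m,n,ℓ}(c; z); in particular, the roots of D_{m,n,ℓ}(c;·) are symmetric about the vertical line Re z = m − 1/2. -/
import Mathlib


noncomputable section

/-- The degree-`2m` polynomial
`D_{m,n,ℓ}(c;z) = (-1)^m ∏_{j=1}^m (z - (n+2ℓ+4j-5)/2)(z + (n+2ℓ-4j+1)/2) + c`. -/
def Dm (m n ℓ : ℕ) (c : ℝ) (z : ℂ) : ℂ :=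
  (-1) ^ m * ∏ j ∈ Finset.Icc 1 m,
      ((z - ((n : ℂ) + 2 * ℓ + 4 * j - 5) / 2) * (z + ((n : ℂ) + 2 * ℓ - 4 * j + 1) / 2))
    + (c : ℂ)

/-- `D_{m,n,ℓ}(c;·)` is symmetric about the vertical line `Re z = m - 1/2`. -/
theorem stmt13 (m n ℓ : ℕ) (hm : 1 ≤ m) (hn : 2 ≤ n) (c : ℝ) (z : ℂ) :
    Dm m n ℓ c ((2 * (m : ℂ) - 1) - z) = Dm m n ℓ c z := by
  unfold Dm
  congr 1
  congr 1
  refine Finset.prod_nbij' (fun j => m + 1 - j) (fun j => m + 1 - j) ?_ ?_ ?_ ?_ ?_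
  · intro a ha
    simp only [Finset.mem_Icc] at *
    omega
  · intro a ha
    simp only [Finset.mem_Icc] at *
    omega
  · intro a ha
    simp only [Finset.mem_Icc] at ha
    show m + 1 - (m + 1 - a) = a
    omega
  · intro a ha
    simp only [Finset.mem_Icc] at ha
    show m + 1 - (m + 1 - a) = a
    omega
  · intro a ha
    simp only [Finset.mem_Icc] at ha
    have h : ((m + 1 - a : ℕ) : ℂ) = (m : ℂ) + 1 - a := by
      push_cast [Nat.cast_sub (by omega : a ≤ m + 1)]
      ring
    rw [h]
    ring
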